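/- Let r_n denote the number of binary strings of length n that are removable in the no-gaps linear coin-removal game. Then r_1 = 1, r_2 = 2, and r_{n+1} = r_n + 2 r_{n-1} + 1 for all n ≥ 2. -/

import Mathlib

/-- Flip the entry at index `j` (no-op if out of range). -/
def ngFlip (l : List Bool) (j : ℕ) : List Bool :=
  l.set j (!(l.getD j false))

/-- One move in the no-gaps linear coin-removal game: remove a `true` entry at
position `i`, flipping the adjacent entries (if they exist) and closing the gap. -/
def ngStep (A B : List Bool) : Prop :=
  ∃ i, i < A.length ∧ A.getD i false = true ∧
    B = ((ngFlip (ngFlip A (i + 1)) (i - 1)).eraseIdx i)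

/-- `Reducible A B`: some sequence of moves transforms `A` into `B`. -/
def Reducible : List Bool → List Bool → Prop :=
  Relation.ReflTransGen ngStep

/-- A sequence is removable if it reduces to the empty list. -/
def Removable (A : List Bool) : Prop :=
  Reducible A []


/-- `r n` is the number of removable binary sequences of length `n`. -/
noncomputable def r (n : ℕ) : ℕ :=
  Set.ncard {A : List Bool | A.length = n ∧ Removable A}

inductive St | E | Z1 | Z2 | SA | SB | SC
deriving DecidableEq
open St

instance : Fintype St := ⟨{E, Z1, Z2, SA, SB, SC}, fun x => by cases x <;> decide⟩

def dlt : St → Bool → St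
  | E, false => Z1 | E, true => SA
  | Z1, false => Z2 | Z1, true => SB
  | Z2, false => Z1 | Z2, true => SA
  | SA, false => SA | SA, true => SC
  | SB, false => SC | SB, true => SA
  | SC, false => SB | SC, true => SB

def acc : St → Bool
  | E => true | SA => true | SB => true | _ => false

def stf (s : St) (l : List Bool) : St := l.foldl dlt s
def st (l : List Bool) : St := stf E l

def sle : St → St → Bool
  | E, SB => true | Z1, SC => true | Z2, SB => true | Z2, E => true
  | s, t => s = t

lemma sle_dlt {s t : St} (h : sle s t) (b : Bool) : sle (dlt s b) (dlt t b) := by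
  revert h; cases s <;> cases t <;> cases b <;> decide

lemma sle_acc {s t : St} (h : sle s t) (h2 : acc s) : acc t := by
  revert h h2; cases s <;> cases t <;> decide

lemma sle_foldl {s t : St} (h : sle s t) (v : List Bool) :
    acc (stf s v) → acc (stf t v) := by
  induction v generalizing s t with
  | nil => exact sle_acc h
  | cons b v ih => exact ih (sle_dlt h b)

def flipHead : List Bool → List Bool
  | [] => []
  | y :: v => (!y) :: v

lemma stf_append (s : St) (u v : List Bool) : stf s (u ++ v) = stf (stf s u) v :=
  List.foldl_append ..

def ngStepAt (i : ℕ) (A B : List Bool) : Prop :=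
  i < A.length ∧ A.getD i false = true ∧
    B = ((ngFlip (ngFlip A (i + 1)) (i - 1)).eraseIdx i)

lemma ngStep_iff_at {A B : List Bool} : ngStep A B ↔ ∃ i, ngStepAt i A B := Iff.rfl

lemma ngFlip_cons (a : Bool) (l : List Bool) (j : ℕ) :
    ngFlip (a :: l) (j + 1) = a :: ngFlip l j := by
  simp [ngFlip]

lemma ngStepAt_cons {i : ℕ} {A B : List Bool} (a : Bool) (h : ngStepAt (i + 1) A B) :
    ngStepAt (i + 2) (a :: A) (a :: B) := by
  obtain ⟨h1, h2, h3⟩ := h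
  refine ⟨by simp at h1 ⊢; omega, by simpa using h2, ?_⟩
  have : i + 2 - 1 = (i + 1 - 1) + 1 := by omega
  rw [show i + 2 + 1 = (i + 1 + 1) + 1 from rfl, ngFlip_cons, this, ngFlip_cons,
    List.eraseIdx_cons_succ, h3]

lemma ngStepAt_cons_iff {i : ℕ} {A B : List Bool} (a : Bool) :
    ngStepAt (i + 2) (a :: A) B ↔ ∃ B', B = a :: B' ∧ ngStepAt (i + 1) A B' := by
  constructor
  · rintro ⟨h1, h2, h3⟩
    refine ⟨(ngFlip (ngFlip A (i + 1 + 1)) (i + 1 - 1)).eraseIdx (i + 1), ?_, ?_, by simpa [List.getD] using h2, rfl⟩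
    · rw [h3, show i + 2 + 1 = (i + 1 + 1) + 1 from rfl, ngFlip_cons,
        show i + 2 - 1 = (i + 1 - 1) + 1 by omega, ngFlip_cons, List.eraseIdx_cons_succ]
    · simp at h1 ⊢; omega
  · rintro ⟨B', rfl, h⟩
    exact ngStepAt_cons a h

lemma ngStep0 (t : List Bool) : ngStep (true :: t) (flipHead t) := by
  refine ⟨0, by simp, by simp, ?_⟩
  cases t <;> simp [ngFlip, flipHead]

lemma ngStepAt1 (x : Bool) (t : List Bool) :
    ngStepAt 1 (x :: true :: t) ((!x) :: flipHead t) := by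
  refine ⟨by simp, by simp, ?_⟩
  cases t <;> simp [ngFlip, flipHead]

lemma ngStepAt1' (u : List Bool) (x : Bool) (t : List Bool) :
    ngStepAt (u.length + 1) (u ++ x :: true :: t) (u ++ (!x) :: flipHead t) := by
  induction u with
  | nil => exact ngStepAt1 x t
  | cons a u ih => simpa [List.length_cons, Nat.add_right_comm] using ngStepAt_cons a ih

lemma ngStep1 (u : List Bool) (x : Bool) (t : List Bool) :
    ngStep (u ++ x :: true :: t) (u ++ (!x) :: flipHead t) :=
  ⟨u.length + 1, ngStepAt1' u x t⟩

lemma ngStepAt_shape1 {i : ℕ} {A B : List Bool} (h : ngStepAt (i + 1) A B) :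
    ∃ u x t, A = u ++ x :: true :: t ∧ B = u ++ (!x) :: flipHead t := by
  induction i generalizing A B with
  | zero =>
    obtain ⟨h1, h2, h3⟩ := h
    match A with
    | x :: y :: t =>
      simp at h2; subst h2
      refine ⟨[], x, t, rfl, ?_⟩
      rw [h3]; cases t <;> simp [ngFlip, flipHead]
  | succ i ih =>
    match A with
    | a :: A' =>
      rw [ngStepAt_cons_iff] at h
      obtain ⟨B', rfl, h⟩ := h
      obtain ⟨u, x, t, rfl, rfl⟩ := ih h
      exact ⟨a :: u, x, t, rfl, rfl⟩

lemma ngStep_shape {A B : List Bool} (h : ngStep A B) :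
    (∃ t, A = true :: t ∧ B = flipHead t) ∨
    (∃ u x t, A = u ++ x :: true :: t ∧ B = u ++ (!x) :: flipHead t) := by
  obtain ⟨i, hi⟩ := h
  cases i with
  | zero =>
    obtain ⟨h1, h2, h3⟩ := hi
    match A with
    | a :: t =>
      simp at h2; subst h2
      exact Or.inl ⟨t, rfl, by rw [h3]; cases t <;> simp [ngFlip, flipHead]⟩
  | succ i => exact Or.inr (ngStepAt_shape1 hi)

lemma step_acc {A B : List Bool} (h : ngStep A B) (hB : acc (st B)) : acc (st A) := by
  rcases ngStep_shape h with ⟨t, rfl, rfl⟩ | ⟨u, x, t, rfl, rfl⟩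
  · cases t with
    | nil => rfl
    | cons y v =>
      have : sle (dlt E (!y)) (dlt (dlt E true) y) := by cases y <;> decide
      exact sle_foldl this v hB
  · unfold st stf at hB ⊢
    rw [List.foldl_append] at hB ⊢
    set s := List.foldl dlt E u with hs
    cases t with
    | nil =>
      revert hB
      show acc (stf s [!x]) → acc (stf s [x, true])
      cases s <;> cases x <;> decide
    | cons y v =>
      have : sle (stf s [!x, !y]) (stf s [x, true, y]) := by
        cases s <;> cases x <;> cases y <;> decide
      exact sle_foldl this v hB

lemma removable_acc {A : List Bool} (h : Removable A) : acc (st A) := by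
  induction h using Relation.ReflTransGen.head_induction_on with
  | refl => rfl
  | head hstep _ ih => exact step_acc hstep ih

lemma zst (k : ℕ) : st (List.replicate (k+1) false) = Z1 ∨ st (List.replicate (k+1) false) = Z2 := by
  induction k with
  | zero => left; rfl
  | succ k ih =>
    rw [List.replicate_succ' (n := k+1), st, stf, List.foldl_append]
    rcases ih with h | h <;> rw [st, stf] at h <;> rw [h] <;> simp [dlt]

lemma all_false_or (A : List Bool) :
    A = List.replicate A.length false ∨ ∃ k t, A = List.replicate k false ++ true :: t := by
  induction A with
  | nil => left; rfl
  | cons b t ih =>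
    cases b with
    | true => exact Or.inr ⟨0, t, rfl⟩
    | false =>
      rcases ih with h | ⟨k, t', rfl⟩
      · left; rw [List.length_cons, List.replicate_succ, ← h]
      · exact Or.inr ⟨k + 1, t', by rw [List.replicate_succ]; rfl⟩

lemma acc_removable : ∀ n (A : List Bool), A.length = n → acc (st A) → Removable A := by
  intro n
  induction n using Nat.strong_induction_on with
  | _ n ih =>
  intro A hlen hacc
  rcases all_false_or A with hA | ⟨k, t, rfl⟩
  · -- all false: must be empty
    cases hn : A.length with
    | zero => rw [List.length_eq_zero_iff] at hn; subst hn; exact Relation.ReflTransGen.refl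
    | succ m =>
      exfalso
      rw [hn] at hA
      rw [hA] at hacc
      rcases zst m with h | h <;> rw [h] at hacc <;> exact absurd hacc (by decide)
  · cases k with
    | zero =>
      -- A = true :: t
      simp only [List.replicate_zero, List.nil_append] at hacc hlen ⊢
      match t with
      | [] => exact Relation.ReflTransGen.head (ngStep0 []) Relation.ReflTransGen.refl
      | false :: t' =>
        refine Relation.ReflTransGen.head (ngStep0 (false :: t')) (ih (n-1) (by simp at hlen; omega) _ (by simp at hlen; simp [flipHead]; omega) ?_)
        exact hacc
      | [true] => exact absurd hacc (by decide)
      | true :: false :: t'' =>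
        refine Relation.ReflTransGen.head (ngStep1 [] true (false :: t'')) (ih (n-1) (by simp at hlen; omega) _ (by simp at hlen; simp [flipHead]; omega) ?_)
        exact hacc
      | true :: true :: t3 =>
        refine Relation.ReflTransGen.head (ngStep1 [true] true t3) (ih (n-1) (by simp at hlen; omega) _ (by cases t3 <;> simp [flipHead] at hlen ⊢ <;> omega) ?_)
        cases t3 with
        | nil => decide
        | cons d v =>
          show acc (st ([true] ++ (!true) :: flipHead (d :: v)))
          unfold st stf at hacc ⊢
          cases d <;> exact hacc
    | succ m =>
      -- A = replicate (m+1) false ++ true :: t; move gives replicate m false ++ true :: flipHead t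
      have hshape : List.replicate (m+1) false ++ true :: t
          = List.replicate m false ++ false :: true :: t := by
        rw [List.replicate_succ' (n := m)]; simp
      have hstep : ngStep (List.replicate (m+1) false ++ true :: t)
          (List.replicate m false ++ (!false) :: flipHead t) := by
        rw [hshape]; exact ngStep1 _ false t
      refine Relation.ReflTransGen.head hstep (ih (n-1) (by simp at hlen; omega) _
        (by cases t <;> simp [flipHead] at hlen ⊢ <;> omega) ?_)
      -- acceptance preserved (states related)
      have hz : List.foldl dlt E (List.replicate m false) = E ∨
          List.foldl dlt E (List.replicate m false) = Z1 ∨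
          List.foldl dlt E (List.replicate m false) = Z2 := by
        cases m with
        | zero => left; rfl
        | succ m' => rcases zst m' with h | h
                     · right; left; exact h
                     · right; right; exact h
      rw [hshape] at hacc
      unfold st stf at hacc ⊢
      rw [List.foldl_append] at hacc ⊢
      cases t with
      | nil =>
        rcases hz with h | h | h <;> rw [h] <;> decide
      | cons y v =>
        revert hacc
        show acc (List.foldl dlt (dlt (dlt (dlt (List.foldl dlt E (List.replicate m false)) false) true) y) v) = true →
          acc (List.foldl dlt (dlt (dlt (List.foldl dlt E (List.replicate m false)) true) (!y)) v) = true
        rcases hz with h | h | h <;> rw [h] <;> cases y <;> exact id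

lemma removable_iff (A : List Bool) : Removable A ↔ acc (st A) :=
  ⟨removable_acc, fun h => acc_removable A.length A rfl h⟩

def L : ℕ → Finset (List Bool)
  | 0 => {[]}
  | n+1 => ((L n).image (· ++ [false])) ∪ ((L n).image (· ++ [true]))

lemma mem_L (n : ℕ) (A : List Bool) : A ∈ L n ↔ A.length = n := by
  induction n generalizing A with
  | zero => simp [L, List.length_eq_zero_iff]
  | succ n ih =>
    simp only [L, Finset.mem_union, Finset.mem_image, ih]
    constructor
    · rintro (⟨w, hw, rfl⟩ | ⟨w, hw, rfl⟩) <;> simp [hw]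
    · intro h
      rcases List.eq_nil_or_concat A with rfl | ⟨w, b, rfl⟩
      · simp at h
      · simp only [List.concat_eq_append, List.length_append, List.length_singleton] at h
        cases b
        · exact Or.inl ⟨w, by omega, by simp⟩
        · exact Or.inr ⟨w, by omega, by simp⟩

def c (n : ℕ) (s : St) : ℕ := ((L n).filter (fun A => st A = s)).card

lemma st_sum (g : St → ℕ) : ∑ t, g t = g E + g Z1 + g Z2 + g SA + g SB + g SC := by
  show Finset.sum _ g = _
  rw [show (Finset.univ : Finset St) = {E, Z1, Z2, SA, SB, SC} from rfl]
  simp [Finset.sum_insert, Finset.mem_insert]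
  ring

lemma card_filter_st (n : ℕ) (f : St → Prop) [DecidablePred f] :
    ((L n).filter (fun A => f (st A))).card = ∑ t ∈ Finset.univ.filter (fun t => f t), c n t := by
  rw [Finset.card_eq_sum_card_fiberwise (f := fun A => st A)
    (t := Finset.univ.filter (fun t => f t)) (fun A hA => by
      simp only [Finset.mem_filter] at hA ⊢
      exact Finset.mem_filter.mpr ⟨Finset.mem_univ _, (Finset.mem_filter.mp hA).2⟩)]
  refine Finset.sum_congr rfl fun t ht => ?_
  simp only [Finset.mem_filter] at ht
  unfold c
  congr 1
  rw [Finset.filter_filter]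
  apply Finset.filter_congr
  intro A _
  constructor
  · rintro ⟨_, h⟩; exact h
  · rintro rfl; exact ⟨ht.2, rfl⟩

lemma append_singleton_injective (b : Bool) : Function.Injective (fun A : List Bool => A ++ [b]) :=
  fun u v h => by simpa using h

lemma c_step (n : ℕ) (s : St) :
    c (n+1) s = (∑ t ∈ Finset.univ.filter (fun t => dlt t false = s), c n t)
      + (∑ t ∈ Finset.univ.filter (fun t => dlt t true = s), c n t) := by
  have hst : ∀ (A : List Bool) (b : Bool), st (A ++ [b]) = dlt (st A) b := fun A b =>
    stf_append E A [b]
  have himg : ∀ b : Bool, ((L n).image (· ++ [b])).filter (fun A => st A = s)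
      = ((L n).filter (fun A => dlt (st A) b = s)).image (· ++ [b]) := by
    intro b
    rw [Finset.filter_image]
    congr 1
    apply Finset.filter_congr
    intro A _
    simp [hst]
  have hdisj : Disjoint ((L n).image (· ++ [false])) ((L n).image (· ++ [true])) := by
    rw [Finset.disjoint_left]
    rintro A hA hA'
    simp only [Finset.mem_image] at hA hA'
    obtain ⟨u, _, rfl⟩ := hA
    obtain ⟨v, _, h⟩ := hA'
    have := congrArg List.getLast? h
    simp [List.getLast?_append] at this
  show ((((L n).image (· ++ [false])) ∪ ((L n).image (· ++ [true]))).filter (fun A => st A = s)).card = _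
  rw [Finset.filter_union, Finset.card_union_of_disjoint
      (Finset.disjoint_filter_filter hdisj), himg, himg,
    Finset.card_image_of_injective _ (append_singleton_injective false),
    Finset.card_image_of_injective _ (append_singleton_injective true)]
  rw [← card_filter_st n (fun t => dlt t false = s), ← card_filter_st n (fun t => dlt t true = s)]

lemma cstep_E (n : ℕ) : c (n+1) E = 0 := by
  rw [c_step, Finset.sum_filter, Finset.sum_filter, st_sum, st_sum]
  simp [dlt]

lemma cstep_Z1 (n : ℕ) : c (n+1) Z1 = c n E + c n Z2 := by
  rw [c_step, Finset.sum_filter, Finset.sum_filter, st_sum, st_sum]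
  simp [dlt]

lemma cstep_Z2 (n : ℕ) : c (n+1) Z2 = c n Z1 := by
  rw [c_step, Finset.sum_filter, Finset.sum_filter, st_sum, st_sum]
  simp [dlt]

lemma cstep_A (n : ℕ) : c (n+1) SA = c n E + c n Z2 + c n SA + c n SB := by
  rw [c_step, Finset.sum_filter, Finset.sum_filter, st_sum, st_sum]
  simp [dlt]
  omega

lemma cstep_B (n : ℕ) : c (n+1) SB = c n Z1 + 2 * c n SC := by
  rw [c_step, Finset.sum_filter, Finset.sum_filter, st_sum, st_sum]
  simp [dlt]
  omega

lemma cstep_C (n : ℕ) : c (n+1) SC = c n SA + c n SB := by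
  rw [c_step, Finset.sum_filter, Finset.sum_filter, st_sum, st_sum]
  simp [dlt]
  omega

lemma c0 : c 0 E = 1 ∧ c 0 Z1 = 0 ∧ c 0 Z2 = 0 ∧ c 0 SA = 0 ∧ c 0 SB = 0 ∧ c 0 SC = 0 := by
  decide

lemma zvals (n : ℕ) : c n E = (if n = 0 then 1 else 0) ∧
    c n Z1 = (if n % 2 = 1 then 1 else 0) ∧
    c n Z2 = (if n ≠ 0 ∧ n % 2 = 0 then 1 else 0) := by
  induction n with
  | zero => exact ⟨c0.1, by simpa using c0.2.1, by simpa using c0.2.2.1⟩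
  | succ n ih =>
    obtain ⟨h1, h2, h3⟩ := ih
    refine ⟨by simp [cstep_E], ?_, ?_⟩
    · rw [cstep_Z1, h1, h3]
      split_ifs <;> omega
    · rw [cstep_Z2, h2]
      split_ifs <;> omega

def q (n : ℕ) : ℕ := ((L n).filter (fun A => acc (st A) = true)).card

lemma q_eq (n : ℕ) : q n = c n E + c n SA + c n SB := by
  unfold q
  rw [card_filter_st n (fun t => acc t = true), Finset.sum_filter, st_sum]
  simp [acc]

lemma r_eq_q (n : ℕ) : r n = q n := by
  unfold r q
  rw [← Set.ncard_coe_finset]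
  congr 1
  ext A
  simp only [Finset.coe_filter, Set.mem_setOf_eq, mem_L, removable_iff]

lemma q_rec (n : ℕ) (hn : 2 ≤ n) : q (n + 1) = q n + 2 * q (n - 1) + 1 := by
  obtain ⟨m, rfl⟩ : ∃ m, n = m + 2 := ⟨n - 2, by omega⟩
  have h1 : q (m + 2 + 1) = c (m+3) E + c (m+3) SA + c (m+3) SB := q_eq (m+3)
  have h2 : q (m + 2) = c (m+2) E + c (m+2) SA + c (m+2) SB := q_eq (m+2)
  have h3 : q (m + 2 - 1) = c (m+1) E + c (m+1) SA + c (m+1) SB := q_eq (m+1)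
  have e0 : c (m+3) E = 0 := cstep_E (m+2)
  have e1 : c (m+2) E = 0 := cstep_E (m+1)
  have e2 : c (m+1) E = 0 := cstep_E m
  have eA : c (m+3) SA = c (m+2) E + c (m+2) Z2 + c (m+2) SA + c (m+2) SB := cstep_A (m+2)
  have eB : c (m+3) SB = c (m+2) Z1 + 2 * c (m+2) SC := cstep_B (m+2)
  have eC : c (m+2) SC = c (m+1) SA + c (m+1) SB := cstep_C (m+1)
  have ez : c (m+2) Z1 + c (m+2) Z2 = 1 := by
    rw [(zvals (m+2)).2.1, (zvals (m+2)).2.2]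
    split_ifs <;> omega
  omega

/-- `r 1 = 1`, `r 2 = 2`, and `r (n+1) = r n + 2 r (n-1) + 1` for `n ≥ 2`. -/
theorem r_recurrence :
    r 1 = 1 ∧ r 2 = 2 ∧ ∀ n, 2 ≤ n → r (n + 1) = r n + 2 * r (n - 1) + 1 := by
  refine ⟨?_, ?_, fun n hn => ?_⟩
  · rw [r_eq_q]; decide
  · rw [r_eq_q]; decide
  · rw [r_eq_q, r_eq_q, r_eq_q]; exact q_rec n hn
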